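/- The 5-vertex graph that is the complement of the disjoint union of K_2 and the path P_3 on three vertices is minimally unlabellable: it is not labellable, but every proper induced subgraph of it is labellable. -/
import Mathlib


/-- `H` is labellable: for some positive integer `k` the vertices of `H` can be
injectively labelled by `k`-element subsets of `ℕ` so that two distinct vertices
are adjacent if and only if their labels intersect in a set of size `k - 1`. -/
def Labellable {V : Type*} (H : SimpleGraph V) : Prop :=
  ∃ k : ℕ, 0 < k ∧ ∃ ℓ : V → Finset ℕ, Function.Injective ℓ ∧
    (∀ v, (ℓ v).card = k) ∧
    ∀ u v : V, u ≠ v → (H.Adj u v ↔ (ℓ u ∩ ℓ v).card = k - 1)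

/-- The disjoint union of `K₂` (on vertices `0, 1`) and the path `P₃` (on
vertices `2, 3, 4`, with edges `2-3` and `3-4`), as a graph on `Fin 5`. -/
def K2PlusP3 : SimpleGraph (Fin 5) :=
  SimpleGraph.fromRel (fun a b =>
    (a = 0 ∧ b = 1) ∨ (a = 2 ∧ b = 3) ∨ (a = 3 ∧ b = 4))

lemma adj_eval (u w : Fin 5) : K2PlusP3ᶜ.Adj u w ↔ (u ≠ w ∧
    ¬((u=0∧w=1)∨(u=2∧w=3)∨(u=3∧w=4)∨(w=0∧u=1)∨(w=2∧u=3)∨(w=3∧u=4))) := by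
  simp [K2PlusP3, SimpleGraph.fromRel_adj, SimpleGraph.compl_adj]
  tauto

lemma sdiff_facts1 {X Y : Finset ℕ} {a : ℕ} (h : X \ Y = {a}) : a ∈ X ∧ a ∉ Y := by
  have := Finset.mem_singleton_self a
  rw [← h] at this
  exact Finset.mem_sdiff.1 this

lemma sdiff_facts2 {X Y : Finset ℕ} {a b : ℕ} (h : X \ Y = {a, b}) :
    (a ∈ X ∧ a ∉ Y) ∧ (b ∈ X ∧ b ∉ Y) := by
  constructor
  · have : a ∈ X \ Y := by rw [h]; simp
    exact Finset.mem_sdiff.1 this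
  · have : b ∈ X \ Y := by rw [h]; simp
    exact Finset.mem_sdiff.1 this

/-- If `X \ Y = {a}` and `Y \ X = {b}` then `Y` is `X` with `a` replaced by `b`. -/
lemma mem1 {X Y : Finset ℕ} {a b : ℕ} (hXY : X \ Y = {a}) (hYX : Y \ X = {b}) :
    ∀ x, x ∈ Y ↔ x = b ∨ (x ∈ X ∧ x ≠ a) := by
  intro x
  have ha := sdiff_facts1 hXY
  have hb := sdiff_facts1 hYX
  constructor
  · intro hx
    by_cases hX : x ∈ X
    · exact Or.inr ⟨hX, fun h => (h ▸ ha.2) hx⟩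
    · have : x ∈ Y \ X := Finset.mem_sdiff.2 ⟨hx, hX⟩
      rw [hYX, Finset.mem_singleton] at this
      exact Or.inl this
  · rintro (rfl | ⟨hX, hne⟩)
    · exact hb.1
    · by_contra h
      have : x ∈ X \ Y := Finset.mem_sdiff.2 ⟨hX, h⟩
      rw [hXY, Finset.mem_singleton] at this
      exact hne this

/-- Same with symmetric difference of size 4. -/
lemma mem2 {X Y : Finset ℕ} {a1 a2 b1 b2 : ℕ} (hXY : X \ Y = {a1, a2})
    (hYX : Y \ X = {b1, b2}) :
    ∀ x, x ∈ Y ↔ x = b1 ∨ x = b2 ∨ (x ∈ X ∧ x ≠ a1 ∧ x ≠ a2) := by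
  intro x
  have ha := sdiff_facts2 hXY
  have hb := sdiff_facts2 hYX
  constructor
  · intro hx
    by_cases hX : x ∈ X
    · refine Or.inr (Or.inr ⟨hX, fun h => (h ▸ ha.1.2) hx, fun h => (h ▸ ha.2.2) hx⟩)
    · have : x ∈ Y \ X := Finset.mem_sdiff.2 ⟨hx, hX⟩
      rw [hYX, Finset.mem_insert, Finset.mem_singleton] at this
      tauto
  · rintro (rfl | rfl | ⟨hX, hne1, hne2⟩)
    · exact hb.1.1
    · exact hb.2.1
    · by_contra h
      have : x ∈ X \ Y := Finset.mem_sdiff.2 ⟨hX, h⟩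
      rw [hXY, Finset.mem_insert, Finset.mem_singleton] at this
      tauto

lemma two_mem_card_ne_one {S : Finset ℕ} {u v : ℕ} (hu : u ∈ S) (hv : v ∈ S)
    (huv : u ≠ v) : S.card ≠ 1 := by
  intro h
  obtain ⟨z, hz⟩ := Finset.card_eq_one.1 h
  rw [hz, Finset.mem_singleton] at hu hv
  exact huv (hu.trans hv.symm)

/-- Two distinct "swaps" of `A` at distance ≥ 2 must differ in both coordinates. -/
lemma pairNe {A X Y : Finset ℕ} {x1 x2 y1 y2 : ℕ}
    (hx : A \ X = {x1}) (hx' : X \ A = {x2}) (hy : A \ Y = {y1}) (hy' : Y \ A = {y2})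
    (hne : X ≠ Y) (h1 : (X \ Y).card ≠ 1) (h2 : (Y \ X).card ≠ 1) :
    x1 ≠ y1 ∧ x2 ≠ y2 := by
  have hx1 := sdiff_facts1 hx
  have hx2 := sdiff_facts1 hx'
  have hy1 := sdiff_facts1 hy
  have hy2 := sdiff_facts1 hy'
  have memX := mem1 hx hx'
  have memY := mem1 hy hy'
  constructor
  · -- x1 ≠ y1
    intro hEq
    by_cases hE2 : x2 = y2
    · -- then X = Y
      apply hne
      ext z
      rw [memX z, memY z, hEq, hE2]
    · -- then X \ Y = {x2}
      apply h1
      have : X \ Y = {x2} := by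
        ext z
        simp only [Finset.mem_sdiff, Finset.mem_singleton]
        constructor
        · rintro ⟨hzX, hzY⟩
          rcases (memX z).1 hzX with h | ⟨hzA, hza⟩
          · exact h
          · exact absurd ((memY z).2 (Or.inr ⟨hzA, hEq ▸ hza⟩)) hzY
        · rintro rfl
          refine ⟨hx2.1, fun hzY => ?_⟩
          rcases (memY z).1 hzY with h | ⟨hzA, _⟩
          · exact hE2 h
          · exact hx2.2 hzA
      rw [this, Finset.card_singleton]
  · -- x2 ≠ y2
    intro hEq
    by_cases hE1 : x1 = y1
    · apply hne
      ext z
      rw [memX z, memY z, hE1, hEq]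
    · -- then Y \ X = {x1}
      apply h2
      have : Y \ X = {x1} := by
        ext z
        simp only [Finset.mem_sdiff, Finset.mem_singleton]
        constructor
        · rintro ⟨hzY, hzX⟩
          rcases (memY z).1 hzY with h | ⟨hzA, hzy⟩
          · exact absurd ((memX z).2 (Or.inl (h.trans hEq.symm))) hzX
          · by_contra hzx1
            exact hzX ((memX z).2 (Or.inr ⟨hzA, hzx1⟩))
        · rintro rfl
          refine ⟨(memY z).2 (Or.inr ⟨hx1.1, hE1⟩), fun hzX => ?_⟩
          rcases (memX z).1 hzX with h | ⟨_, hza⟩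
          · exact hx2.2 (h ▸ hx1.1)
          · exact hza rfl
      rw [this, Finset.card_singleton]

/-- A common neighbour `C` of `A` and `B` (where `A`, `B` are at distance 2)
has its swap coordinates inside the symmetric difference of `A` and `B`. -/
lemma inPair {A B C : Finset ℕ} {c1 c2 x1 x2 y1 y2 : ℕ}
    (hc : A \ C = {c1}) (hc' : C \ A = {c2})
    (hx : A \ B = {x1, x2}) (hy : B \ A = {y1, y2})
    (hy12 : y1 ≠ y2) (hBC : (B \ C).card = 1) :
    (c1 = x1 ∨ c1 = x2) ∧ (c2 = y1 ∨ c2 = y2) := by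
  have hc1 := sdiff_facts1 hc
  have hc2 := sdiff_facts1 hc'
  have hxf := sdiff_facts2 hx
  have hyf := sdiff_facts2 hy
  have memC := mem1 hc hc'
  have memB := mem2 hx hy
  have hcy : c2 = y1 ∨ c2 = y2 := by
    by_contra h
    push_neg at h
    have hy1BC : y1 ∈ B \ C := by
      refine Finset.mem_sdiff.2 ⟨hyf.1.1, fun hC => ?_⟩
      rcases (memC y1).1 hC with h' | ⟨hA, _⟩
      · exact h.1 h'.symm
      · exact hyf.1.2 hA
    have hy2BC : y2 ∈ B \ C := by
      refine Finset.mem_sdiff.2 ⟨hyf.2.1, fun hC => ?_⟩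
      rcases (memC y2).1 hC with h' | ⟨hA, _⟩
      · exact h.2 h'.symm
      · exact hyf.2.2 hA
    exact two_mem_card_ne_one hy1BC hy2BC hy12 hBC
  refine ⟨?_, hcy⟩
  by_contra h
  push_neg at h
  have hc1B : c1 ∈ B := (memB c1).2 (Or.inr (Or.inr ⟨hc1.1, h.1, h.2⟩))
  have hc1BC : c1 ∈ B \ C := Finset.mem_sdiff.2 ⟨hc1B, hc1.2⟩
  rcases hcy with rfl | rfl
  · -- use y2
    have hy2BC : y2 ∈ B \ C := by
      refine Finset.mem_sdiff.2 ⟨hyf.2.1, fun hC => ?_⟩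
      rcases (memC y2).1 hC with h' | ⟨hA, _⟩
      · exact hy12 h'.symm
      · exact hyf.2.2 hA
    exact two_mem_card_ne_one hc1BC hy2BC (fun h' => hyf.2.2 (h' ▸ hc1.1)) hBC
  · have hy1BC : y1 ∈ B \ C := by
      refine Finset.mem_sdiff.2 ⟨hyf.1.1, fun hC => ?_⟩
      rcases (memC y1).1 hC with h' | ⟨hA, _⟩
      · exact hy12 h'
      · exact hyf.1.2 hA
    exact two_mem_card_ne_one hc1BC hy1BC (fun h' => hyf.1.2 (h' ▸ hc1.1)) hBC

/-- Labellability of an induced subgraph from a labelling valid away from one vertex. -/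
lemma induce_labellable {G : SimpleGraph (Fin 5)} {s : Set (Fin 5)} {v0 : Fin 5}
    (hv : v0 ∉ s) (k : ℕ) (hk : 0 < k) (ℓ : Fin 5 → Finset ℕ)
    (hinj : ∀ u w : Fin 5, u ≠ v0 → w ≠ v0 → ℓ u = ℓ w → u = w)
    (hcard : ∀ u : Fin 5, u ≠ v0 → (ℓ u).card = k)
    (hadj : ∀ u w : Fin 5, u ≠ v0 → w ≠ v0 → u ≠ w →
      (G.Adj u w ↔ (ℓ u ∩ ℓ w).card = k - 1)) :
    Labellable (G.induce s) := by
  have hne : ∀ x : s, (x : Fin 5) ≠ v0 := fun x h => hv (h ▸ x.2)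
  refine ⟨k, hk, fun x => ℓ x.1, ?_, ?_, ?_⟩
  · intro a b h
    exact Subtype.ext (hinj a.1 b.1 (hne a) (hne b) h)
  · intro x
    exact hcard x.1 (hne x)
  · intro u w huw
    have huw' : (u : Fin 5) ≠ (w : Fin 5) := fun h => huw (Subtype.ext h)
    have : (G.induce s).Adj u w ↔ G.Adj u.1 w.1 := by
      simp [SimpleGraph.comap_adj]
    rw [this]
    exact hadj u.1 w.1 (hne u) (hne w) huw'

/-- The 5-vertex graph that is the complement of the disjoint union of `K₂` and
the path `P₃` on three vertices is minimally unlabellable: it is not labellable,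
but every proper induced subgraph of it is labellable. -/
theorem compl_K2_plus_P3_minimally_unlabellable :
    ¬ Labellable K2PlusP3ᶜ ∧
      ∀ s : Set (Fin 5), s ≠ Set.univ → Labellable (K2PlusP3ᶜ.induce s) := by
  constructor
  · rintro ⟨k, hk, ℓ, hinj, hcard, hadj⟩
    -- adjacency reformulated through set differences
    have key : ∀ u v : Fin 5, u ≠ v → (K2PlusP3ᶜ.Adj u v ↔ (ℓ u \ ℓ v).card = 1) := by
      intro u v huv
      rw [hadj u v huv]
      have h1 := Finset.card_inter_add_card_sdiff (ℓ u) (ℓ v)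
      have h2 := hcard u
      omega
    have hinj' : ∀ u v : Fin 5, u ≠ v → ℓ u ≠ ℓ v := fun u v huv h => huv (hinj h)
    -- adjacency facts
    have a02 : (ℓ 0 \ ℓ 2).card = 1 :=
      (key 0 2 (by decide)).1 ((adj_eval 0 2).2 (by decide))
    have a20 : (ℓ 2 \ ℓ 0).card = 1 :=
      (key 2 0 (by decide)).1 ((adj_eval 2 0).2 (by decide))
    have a03 : (ℓ 0 \ ℓ 3).card = 1 :=
      (key 0 3 (by decide)).1 ((adj_eval 0 3).2 (by decide))
    have a30 : (ℓ 3 \ ℓ 0).card = 1 :=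
      (key 3 0 (by decide)).1 ((adj_eval 3 0).2 (by decide))
    have a04 : (ℓ 0 \ ℓ 4).card = 1 :=
      (key 0 4 (by decide)).1 ((adj_eval 0 4).2 (by decide))
    have a40 : (ℓ 4 \ ℓ 0).card = 1 :=
      (key 4 0 (by decide)).1 ((adj_eval 4 0).2 (by decide))
    have a12 : (ℓ 1 \ ℓ 2).card = 1 :=
      (key 1 2 (by decide)).1 ((adj_eval 1 2).2 (by decide))
    have a21 : (ℓ 2 \ ℓ 1).card = 1 :=
      (key 2 1 (by decide)).1 ((adj_eval 2 1).2 (by decide))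
    have a13 : (ℓ 1 \ ℓ 3).card = 1 :=
      (key 1 3 (by decide)).1 ((adj_eval 1 3).2 (by decide))
    have a14 : (ℓ 1 \ ℓ 4).card = 1 :=
      (key 1 4 (by decide)).1 ((adj_eval 1 4).2 (by decide))
    -- non-adjacency facts
    have n01 : (ℓ 0 \ ℓ 1).card ≠ 1 := fun h => by
      have := (key 0 1 (by decide)).2 h
      rw [adj_eval] at this
      revert this; decide
    have n23 : (ℓ 2 \ ℓ 3).card ≠ 1 := fun h => by
      have := (key 2 3 (by decide)).2 h
      rw [adj_eval] at this
      revert this; decide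
    have n32 : (ℓ 3 \ ℓ 2).card ≠ 1 := fun h => by
      have := (key 3 2 (by decide)).2 h
      rw [adj_eval] at this
      revert this; decide
    have n34 : (ℓ 3 \ ℓ 4).card ≠ 1 := fun h => by
      have := (key 3 4 (by decide)).2 h
      rw [adj_eval] at this
      revert this; decide
    have n43 : (ℓ 4 \ ℓ 3).card ≠ 1 := fun h => by
      have := (key 4 3 (by decide)).2 h
      rw [adj_eval] at this
      revert this; decide
    -- extract singletons
    obtain ⟨c1, hc1⟩ := Finset.card_eq_one.1 a02
    obtain ⟨c2, hc2⟩ := Finset.card_eq_one.1 a20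
    obtain ⟨d1, hd1⟩ := Finset.card_eq_one.1 a03
    obtain ⟨d2, hd2⟩ := Finset.card_eq_one.1 a30
    obtain ⟨e1, he1⟩ := Finset.card_eq_one.1 a04
    obtain ⟨e2, he2⟩ := Finset.card_eq_one.1 a40
    obtain ⟨g, hg⟩ := Finset.card_eq_one.1 a21
    -- |ℓ0 \ ℓ1| = 2
    have hABsub : ℓ 0 \ ℓ 1 ⊆ {c1} ∪ {g} := by
      intro x hx
      rw [Finset.mem_sdiff] at hx
      by_cases hx2 : x ∈ ℓ 2
      · have : x ∈ ℓ 2 \ ℓ 1 := Finset.mem_sdiff.2 ⟨hx2, hx.2⟩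
        rw [hg] at this
        simp only [Finset.mem_union]
        exact Or.inr this
      · have : x ∈ ℓ 0 \ ℓ 2 := Finset.mem_sdiff.2 ⟨hx.1, hx2⟩
        rw [hc1] at this
        simp only [Finset.mem_union]
        exact Or.inl this
    have hABle : (ℓ 0 \ ℓ 1).card ≤ 2 := by
      calc (ℓ 0 \ ℓ 1).card ≤ ({c1} ∪ {g} : Finset ℕ).card := Finset.card_le_card hABsub
        _ ≤ ({c1} : Finset ℕ).card + ({g} : Finset ℕ).card := Finset.card_union_le _ _
        _ = 2 := by simp
    have hABpos : 0 < (ℓ 0 \ ℓ 1).card := by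
      rcases Nat.eq_zero_or_pos (ℓ 0 \ ℓ 1).card with h | h
      · exfalso
        have hsub : ℓ 0 ⊆ ℓ 1 := by
          intro x hx
          by_contra hx'
          have : x ∈ ℓ 0 \ ℓ 1 := Finset.mem_sdiff.2 ⟨hx, hx'⟩
          rw [Finset.card_eq_zero.1 h] at this
          exact absurd this (Finset.notMem_empty x)
        have : ℓ 0 = ℓ 1 := Finset.eq_of_subset_of_card_le hsub (by rw [hcard 0, hcard 1])
        exact hinj' 0 1 (by decide) this
      · exact h
    have hAB2 : (ℓ 0 \ ℓ 1).card = 2 := by omega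
    have hBA2 : (ℓ 1 \ ℓ 0).card = 2 := by
      have h1 := Finset.card_inter_add_card_sdiff (ℓ 0) (ℓ 1)
      have h2 := Finset.card_inter_add_card_sdiff (ℓ 1) (ℓ 0)
      rw [Finset.inter_comm] at h2
      have h3 := hcard 0
      have h4 := hcard 1
      omega
    obtain ⟨x1, x2, hx12, hx⟩ := Finset.card_eq_two.1 hAB2
    obtain ⟨y1, y2, hy12, hy⟩ := Finset.card_eq_two.1 hBA2
    -- distinctness of swap coordinates
    have hCD := pairNe hc1 hc2 hd1 hd2 (hinj' 2 3 (by decide)) n23 n32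
    have hDE := pairNe hd1 hd2 he1 he2 (hinj' 3 4 (by decide)) n34 n43
    -- coordinates lie in the symmetric difference of ℓ0 and ℓ1
    have hC := inPair hc1 hc2 hx hy hy12 a12
    have hD := inPair hd1 hd2 hx hy hy12 a13
    have hE := inPair he1 he2 hx hy hy12 a14
    -- pigeonhole: c1 = e1 and c2 = e2
    have hce1 : c1 = e1 := by
      rcases hC.1 with h | h <;> rcases hD.1 with h' | h' <;> rcases hE.1 with h'' | h'' <;>
        first
        | exact h.trans h''.symm
        | (exact absurd (h.trans h'.symm) hCD.1)
        | (exact absurd (h'.trans h''.symm) hDE.1)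
    have hce2 : c2 = e2 := by
      rcases hC.2 with h | h <;> rcases hD.2 with h' | h' <;> rcases hE.2 with h'' | h'' <;>
        first
        | exact h.trans h''.symm
        | (exact absurd (h.trans h'.symm) hCD.2)
        | (exact absurd (h'.trans h''.symm) hDE.2)
    -- hence ℓ2 = ℓ4, contradiction
    have memC := mem1 hc1 hc2
    have memE := mem1 he1 he2
    apply hinj' 2 4 (by decide)
    ext z
    rw [memC z, memE z, hce1, hce2]
  · intro s hs
    obtain ⟨v0, hv0⟩ := (Set.ne_univ_iff_exists_notMem s).1 hs
    fin_cases v0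
    · -- remove 0 : vertices 1,2,3,4
      refine induce_labellable hv0 2 (by norm_num)
        ![∅, {1,2}, {1,3}, {2,5}, {1,4}] (by decide) (by decide) ?_
      simp only [adj_eval]
      decide
    · -- remove 1 : vertices 0,2,3,4
      refine induce_labellable hv0 2 (by norm_num)
        ![{1,2}, ∅, {1,3}, {2,5}, {1,4}] (by decide) (by decide) ?_
      simp only [adj_eval]
      decide
    · -- remove 2 : vertices 0,1,3,4
      refine induce_labellable hv0 2 (by norm_num)
        ![{1,2}, {3,4}, ∅, {1,3}, {2,4}] (by decide) (by decide) ?_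
      simp only [adj_eval]
      decide
    · -- remove 3 : vertices 0,1,2,4
      refine induce_labellable hv0 2 (by norm_num)
        ![{1,4}, {2,3}, {1,2}, ∅, {1,3}] (by decide) (by decide) ?_
      simp only [adj_eval]
      decide
    · -- remove 4 : vertices 0,1,2,3
      refine induce_labellable hv0 2 (by norm_num)
        ![{1,2}, {3,4}, {1,3}, {2,4}, ∅] (by decide) (by decide) ?_
      simp only [adj_eval]
      decide
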